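/- Let X be a compact metric space, let T : X → X be a nonexpansive operator, and let ε > 0. Then there exists δ > 0 such that for each x ∈ X satisfying ρ(x, T(x)) ≤ δ one has d(x, Fix(T)) ≤ ε. -/
import Mathlib


/-- Let `X` be a compact metric space, `T : X → X` nonexpansive, and `ε > 0`.
Then there exists `δ > 0` such that every `x ∈ X` with `dist x (T x) ≤ δ`
satisfies `d(x, Fix(T)) ≤ ε`. -/
theorem approx_fixed_point_near_fixed_point_set
    {X : Type*} [MetricSpace X] [CompactSpace X] (T : X → X)
    (hT : ∀ x y : X, dist (T x) (T y) ≤ dist x y)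
    (ε : ℝ) (hε : 0 < ε) :
    ∃ δ > 0, ∀ x : X, dist x (T x) ≤ δ →
      Metric.infDist x {y : X | T y = y} ≤ ε := by
  by_contra h
  push_neg at h
  -- choose a sequence
  have hseq : ∀ n : ℕ, ∃ x : X, dist x (T x) ≤ 1 / (n + 1) ∧
      ε < Metric.infDist x {y : X | T y = y} := by
    intro n
    obtain ⟨x, hx1, hx2⟩ := h (1 / (n + 1)) (by positivity)
    exact ⟨x, hx1, hx2⟩
  choose u hu1 hu2 using hseq
  obtain ⟨x, -, φ, hφ, hlim⟩ := isCompact_univ.tendsto_subseq (fun n => Set.mem_univ (u n))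
  have hTcont : Continuous T := by
    exact LipschitzWith.continuous (K := 1)
      (LipschitzWith.of_dist_le_mul fun a b => by simpa using hT a b)
  have hfix : T x = x := by
    have h1 : Filter.Tendsto (fun n => dist (u (φ n)) (T (u (φ n)))) Filter.atTop
        (nhds (dist x (T x))) :=
      (Filter.Tendsto.dist hlim ((hTcont.continuousAt).tendsto.comp hlim))
    have h2 : Filter.Tendsto (fun n => dist (u (φ n)) (T (u (φ n)))) Filter.atTop (nhds 0) := by
      apply squeeze_zero (fun n => dist_nonneg) (fun n => hu1 (φ n))
      have : Filter.Tendsto (fun n : ℕ => 1 / ((n : ℝ) + 1)) Filter.atTop (nhds 0) :=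
        tendsto_one_div_add_atTop_nhds_zero_nat
      exact this.comp hφ.tendsto_atTop
    have := tendsto_nhds_unique h1 h2
    exact (dist_eq_zero.mp this).symm
  have hxmem : x ∈ {y : X | T y = y} := hfix
  have hd : Filter.Tendsto (fun n => Metric.infDist (u (φ n)) {y : X | T y = y})
      Filter.atTop (nhds (Metric.infDist x {y : X | T y = y})) :=
    ((Metric.continuous_infDist_pt _).continuousAt).tendsto.comp hlim
  have hx0 : Metric.infDist x {y : X | T y = y} = 0 :=
    le_antisymm (by simpa using Metric.infDist_le_dist_of_mem (x := x) hxmem) Metric.infDist_nonneg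
  have : ε ≤ Metric.infDist x {y : X | T y = y} :=
    ge_of_tendsto hd (Filter.Eventually.of_forall fun n => (hu2 (φ n)).le)
  rw [hx0] at this
  exact absurd this (not_le.mpr hε)
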